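/- Let S = ⟨a_0,…,a_g⟩ be a numerical semigroup that is free for the arrangement (a_0,…,a_g), and let φ : ℂ[x_0,…,x_g] → ℂ[t] be the ℂ-algebra homomorphism with φ(x_j) = t^{a_j}. Then there exist natural numbers λ_{i,j} (for 1 ≤ i ≤ g and 0 ≤ j ≤ i−1) with n_i·a_i = Σ_{j=0}^{i-1} λ_{i,j}·a_j, such that the kernel of φ is generated as an ideal by the g binomials x_i^{n_i} − ∏_{j=0}^{i-1} x_j^{λ_{i,j}}, i = 1,…,g. In particular the toric ideal I_S = ker(φ) is a complete intersection generated by g binomials. -/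

import Mathlib

/-- `eSeq a i = gcd(a 0, …, a i)`. -/
def eSeq (a : ℕ → ℕ) : ℕ → ℕ
  | 0 => a 0
  | i + 1 => Nat.gcd (eSeq a i) (a (i + 1))

/-- `nSeq a i = e_{i-1} / e_i` (intended for `1 ≤ i`). -/
def nSeq (a : ℕ → ℕ) (i : ℕ) : ℕ := eSeq a (i - 1) / eSeq a i

/-- `gen a i = ⟨a 0, …, a i⟩`, the set of all ℕ-linear combinations. -/
def gen (a : ℕ → ℕ) (i : ℕ) : Set ℕ :=
  {s | ∃ c : ℕ → ℕ, s = ∑ j ∈ Finset.range (i + 1), c j * a j}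

/-- The semigroup `S = ⟨a 0, …, a g⟩` is free for the arrangement `(a 0, …, a g)`. -/
def IsFreeArr (a : ℕ → ℕ) (g : ℕ) : Prop :=
  eSeq a g = 1 ∧ ∀ i, 1 ≤ i → i ≤ g → nSeq a i * a i ∈ gen a (i - 1)

/-- The ℂ-algebra map `ℂ[x_0, …, x_g] → ℂ[t]`, `x_j ↦ t^{a_j}`. -/
noncomputable def phiMap (g : ℕ) (a : ℕ → ℕ) :
    MvPolynomial (Fin (g + 1)) ℂ →ₐ[ℂ] Polynomial ℂ :=
  MvPolynomial.aeval fun j : Fin (g + 1) => (Polynomial.X : Polynomial ℂ) ^ (a j.val)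

/-! ### Auxiliary arithmetic lemmas -/

lemma eSeq_pos (a : ℕ → ℕ) (h : 0 < a 0) : ∀ i, 0 < eSeq a i
  | 0 => h
  | i + 1 => Nat.gcd_pos_of_pos_left _ (eSeq_pos a h i)

lemma eSeq_succ_dvd (a : ℕ → ℕ) (i : ℕ) : eSeq a (i + 1) ∣ eSeq a i :=
  Nat.gcd_dvd_left _ _

lemma eSeq_dvd_a (a : ℕ → ℕ) : ∀ i j, j ≤ i → eSeq a i ∣ a j := by
  intro i
  induction i with
  | zero => intro j hj; interval_cases j; exact dvd_refl _
  | succ i ih =>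
    intro j hj
    rcases Nat.lt_or_ge j (i + 1) with h | h
    · exact (Nat.gcd_dvd_left _ _).trans (ih j (Nat.lt_succ_iff.mp h))
    · have : j = i + 1 := le_antisymm hj h
      subst this; exact Nat.gcd_dvd_right _ _

lemma nSeq_mul_eSeq (a : ℕ → ℕ) (i : ℕ) (hi : 1 ≤ i) :
    nSeq a i * eSeq a i = eSeq a (i - 1) := by
  obtain ⟨k, rfl⟩ : ∃ k, i = k + 1 := ⟨i - 1, by omega⟩
  have hd : eSeq a (k + 1) ∣ eSeq a k := eSeq_succ_dvd a k
  simpa [nSeq] using Nat.div_mul_cancel hd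

lemma nSeq_pos (a : ℕ → ℕ) (h : 0 < a 0) (i : ℕ) (hi : 1 ≤ i) : 0 < nSeq a i := by
  have h1 := eSeq_pos a h (i - 1)
  rw [← nSeq_mul_eSeq a i hi] at h1
  rcases Nat.eq_zero_or_pos (nSeq a i) with h0 | h0
  · rw [h0, zero_mul] at h1; exact absurd h1 (lt_irrefl 0)
  · exact h0

lemma nSeq_coprime (a : ℕ → ℕ) (h : 0 < a 0) (i : ℕ) (hi : 1 ≤ i) :
    Nat.Coprime (nSeq a i) (a i / eSeq a i) := by
  obtain ⟨k, rfl⟩ : ∃ k, i = k + 1 := ⟨i - 1, by omega⟩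
  have hpos : 0 < Nat.gcd (eSeq a k) (a (k + 1)) := Nat.gcd_pos_of_pos_left _ (eSeq_pos a h k)
  have := Nat.coprime_div_gcd_div_gcd hpos
  have hg : eSeq a (k + 1) = Nat.gcd (eSeq a k) (a (k + 1)) := rfl
  unfold nSeq
  simpa [hg] using this

/-- Uniqueness of bounded representations in a free numerical semigroup. -/
lemma uniq_rep (a : ℕ → ℕ) (h0 : 0 < a 0) :
    ∀ k, ∀ c d : ℕ → ℕ,
      (∀ i, 1 ≤ i → i ≤ k → c i < nSeq a i) →
      (∀ i, 1 ≤ i → i ≤ k → d i < nSeq a i) →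
      (∑ j ∈ Finset.range (k + 1), c j * a j) = (∑ j ∈ Finset.range (k + 1), d j * a j) →
      ∀ i, i ≤ k → c i = d i := by
  intro k
  induction k with
  | zero =>
    intro c d _ _ hsum i hi
    interval_cases i
    simp only [zero_add, Finset.sum_range_one] at hsum
    exact Nat.eq_of_mul_eq_mul_right h0 hsum
  | succ k ih =>
    intro c d hc hd hsum i hi
    have hsum' : (∑ j ∈ Finset.range (k + 1), (c j : ℤ) * a j) + c (k+1) * a (k+1)
        = (∑ j ∈ Finset.range (k + 1), (d j : ℤ) * a j) + d (k+1) * a (k+1) := by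
      rw [← Finset.sum_range_succ (fun j => (c j : ℤ) * a j),
          ← Finset.sum_range_succ (fun j => (d j : ℤ) * a j)]
      exact_mod_cast hsum
    have hstep : c (k+1) = d (k+1) := by
      have key : ((c (k+1) : ℤ) - d (k+1)) * a (k+1)
          = (∑ j ∈ Finset.range (k + 1), (d j : ℤ) * a j)
            - (∑ j ∈ Finset.range (k + 1), (c j : ℤ) * a j) := by
        linear_combination hsum'
      have hdvd : (eSeq a k : ℤ) ∣ ((c (k+1) : ℤ) - d (k+1)) * a (k+1) := by
        rw [key]
        apply dvd_sub <;>
        · apply Finset.dvd_sum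
          intro j hj
          exact Dvd.dvd.mul_left (Int.natCast_dvd_natCast.mpr
            (eSeq_dvd_a a k j (Nat.lt_succ_iff.mp (Finset.mem_range.mp hj)))) _
      have hem : (0:ℕ) < eSeq a (k+1) := eSeq_pos a h0 (k+1)
      have hek : nSeq a (k+1) * eSeq a (k+1) = eSeq a k := by
        simpa using nSeq_mul_eSeq a (k+1) (by omega)
      have hb : eSeq a (k+1) * (a (k+1) / eSeq a (k+1)) = a (k+1) :=
        Nat.mul_div_cancel' (eSeq_dvd_a a (k+1) (k+1) le_rfl)
      have h1 : ((nSeq a (k+1) : ℤ) * eSeq a (k+1))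
          ∣ (((c (k+1) : ℤ) - d (k+1)) * ((a (k+1) / eSeq a (k+1) : ℕ) : ℤ)) * eSeq a (k+1) := by
        have heq : (((c (k+1) : ℤ) - d (k+1)) * ((a (k+1) / eSeq a (k+1) : ℕ) : ℤ)) * eSeq a (k+1)
            = ((c (k+1) : ℤ) - d (k+1)) * a (k+1) := by
          have : ((eSeq a (k+1) : ℤ)) * (a (k+1) / eSeq a (k+1) : ℕ) = a (k+1) := by
            exact_mod_cast hb
          linear_combination ((c (k+1) : ℤ) - d (k+1)) * this
        have hcast : ((eSeq a k : ℤ)) = (nSeq a (k+1) : ℤ) * eSeq a (k+1) := by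
          exact_mod_cast hek.symm
        rw [heq, ← hcast]; exact hdvd
      have hdvd2 : (nSeq a (k+1) : ℤ) ∣ ((c (k+1) : ℤ) - d (k+1)) * ((a (k+1) / eSeq a (k+1) : ℕ) : ℤ) :=
        (mul_dvd_mul_iff_right (by exact_mod_cast hem.ne' : ((eSeq a (k+1) : ℤ)) ≠ 0)).mp h1
      have hcop : IsCoprime ((nSeq a (k+1) : ℤ)) ((a (k+1) / eSeq a (k+1) : ℕ) : ℤ) :=
        Nat.isCoprime_iff_coprime.mpr (nSeq_coprime a h0 (k+1) (by omega))
      have hdvd3 : (nSeq a (k+1) : ℤ) ∣ ((c (k+1) : ℤ) - d (k+1)) :=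
        hcop.dvd_of_dvd_mul_right hdvd2
      have hcm : c (k+1) < nSeq a (k+1) := hc (k+1) (by omega) le_rfl
      have hdm : d (k+1) < nSeq a (k+1) := hd (k+1) (by omega) le_rfl
      have : (c (k+1) : ℤ) - d (k+1) = 0 := Int.eq_zero_of_abs_lt_dvd hdvd3 (by
        rw [abs_sub_lt_iff]; omega)
      omega
    rcases Nat.lt_or_ge i (k+1) with him | him
    · have hsum2 : (∑ j ∈ Finset.range (k + 1), c j * a j)
          = ∑ j ∈ Finset.range (k + 1), d j * a j := by
        have hsZ : (∑ j ∈ Finset.range (k + 1), (c j : ℤ) * a j)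
            = ∑ j ∈ Finset.range (k + 1), (d j : ℤ) * a j := by
          rw [hstep] at hsum'
          omega
        exact_mod_cast hsZ
      exact ih c d (fun i h1 h2 => hc i h1 (by omega)) (fun i h1 h2 => hd i h1 (by omega)) hsum2 i
        (by omega)
    · have : i = k + 1 := by omega
      rw [this]; exact hstep

/-! ### Auxiliary algebra lemmas -/

/-- Weight function for the termination measure of rewriting. -/
def wtAux (lam' : ℕ → ℕ → ℕ) : ℕ → ℕ
  | 0 => 0
  | m + 1 => 1 + ∑ j ∈ (Finset.range (m + 1)).attach,
      lam' (m + 1) j.1 * wtAux lam' j.1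
  decreasing_by exact Finset.mem_range.mp j.2

lemma wtAux_succ (lam' : ℕ → ℕ → ℕ) (m : ℕ) :
    wtAux lam' (m + 1)
      = 1 + ∑ j ∈ Finset.range (m + 1), lam' (m + 1) j * wtAux lam' j := by
  rw [wtAux]
  congr 1
  exact Finset.sum_attach (Finset.range (m + 1)) (fun j => lam' (m + 1) j * wtAux lam' j)

lemma sum_filter_lt {M : Type*} [AddCommMonoid M] (g m : ℕ) (hm : m ≤ g + 1) (f : ℕ → M) :
    ∑ j ∈ Finset.univ.filter (fun j : Fin (g + 1) => j.val < m), f j.val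
      = ∑ j ∈ Finset.range m, f j := by
  refine Finset.sum_bij' (fun (j : Fin (g+1)) _ => j.val)
    (fun j hj => (⟨j, by have := Finset.mem_range.mp hj; omega⟩ : Fin (g+1)))
    ?_ ?_ ?_ ?_ ?_
  · intro j hj
    exact Finset.mem_range.mpr (Finset.mem_filter.mp hj).2
  · intro j hj
    exact Finset.mem_filter.mpr ⟨Finset.mem_univ _, Finset.mem_range.mp hj⟩
  · intro j hj; rfl
  · intro j hj; rfl
  · intro j hj; rfl

lemma prod_X_pow {σ : Type*} [DecidableEq σ] (s : Finset σ) (d : σ → ℕ) :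
    ∏ j ∈ s, (MvPolynomial.X j : MvPolynomial σ ℂ) ^ d j
      = MvPolynomial.monomial (∑ j ∈ s, Finsupp.single j (d j)) 1 := by
  induction s using Finset.cons_induction with
  | empty => simp [MvPolynomial.monomial_zero']
  | cons j s hj ih =>
      rw [Finset.prod_cons, Finset.sum_cons, ih, MvPolynomial.X_pow_eq_monomial,
        MvPolynomial.monomial_mul, one_mul]

lemma phi_monomial (g : ℕ) (a : ℕ → ℕ) (c : Fin (g+1) →₀ ℕ) :
    phiMap g a (MvPolynomial.monomial c 1)
      = Polynomial.X ^ (∑ i : Fin (g+1), c i * a i.val) := by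
  simp only [phiMap, MvPolynomial.aeval_monomial, map_one, one_mul, Finsupp.prod]
  have h1 : ∀ i ∈ c.support,
      ((Polynomial.X : Polynomial ℂ) ^ a i.val) ^ c i = Polynomial.X ^ (c i * a i.val) := by
    intro i _; rw [← pow_mul, mul_comm]
  rw [Finset.prod_congr rfl h1, Finset.prod_pow_eq_pow_sum]
  congr 1
  refine Finset.sum_subset (Finset.subset_univ _) fun x _ hx => ?_
  rw [Finsupp.notMem_support_iff.mp hx, zero_mul]

/-- Injectivity of the value map on normal-form exponent vectors. -/
lemma V_inj (g : ℕ) (a : ℕ → ℕ) (hpos : ∀ i, i ≤ g → 0 < a i)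
    (c d : Fin (g+1) →₀ ℕ)
    (hc : ∀ i : Fin (g+1), i ≠ 0 → c i < nSeq a i.val)
    (hd : ∀ i : Fin (g+1), i ≠ 0 → d i < nSeq a i.val)
    (hsum : (∑ i : Fin (g+1), c i * a i.val) = ∑ i : Fin (g+1), d i * a i.val) :
    c = d := by
  set cN : ℕ → ℕ := fun m => if h : m < g + 1 then c ⟨m, h⟩ else 0 with hcN
  set dN : ℕ → ℕ := fun m => if h : m < g + 1 then d ⟨m, h⟩ else 0 with hdN
  have hcs : (∑ i : Fin (g+1), c i * a i.val) = ∑ m ∈ Finset.range (g+1), cN m * a m := by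
    rw [← Fin.sum_univ_eq_sum_range (fun m => cN m * a m) (g+1)]
    refine Finset.sum_congr rfl fun i _ => ?_
    simp [hcN, i.isLt, Nat.le_of_lt_succ i.isLt]
  have hds : (∑ i : Fin (g+1), d i * a i.val) = ∑ m ∈ Finset.range (g+1), dN m * a m := by
    rw [← Fin.sum_univ_eq_sum_range (fun m => dN m * a m) (g+1)]
    refine Finset.sum_congr rfl fun i _ => ?_
    simp [hdN, i.isLt, Nat.le_of_lt_succ i.isLt]
  have key := uniq_rep a (hpos 0 (Nat.zero_le g)) g cN dN
    (fun m h1 h2 => by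
      simp only [hcN]
      rw [dif_pos (by omega : m < g + 1)]
      exact hc ⟨m, by omega⟩ (by simp [Fin.ext_iff]; omega))
    (fun m h1 h2 => by
      simp only [hdN]
      rw [dif_pos (by omega : m < g + 1)]
      exact hd ⟨m, by omega⟩ (by simp [Fin.ext_iff]; omega))
    (by rw [← hcs, ← hds]; exact hsum)
  ext i
  have := key i.val (by have := i.isLt; omega)
  simpa [hcN, hdN, i.isLt, Nat.le_of_lt_succ i.isLt] using this

theorem stmt_14 (g : ℕ) (a : ℕ → ℕ) (hpos : ∀ i, i ≤ g → 0 < a i)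
    (hfree : IsFreeArr a g) :
    ∃ lam : Fin (g + 1) → Fin (g + 1) → ℕ,
      (∀ i : Fin (g + 1), i ≠ 0 →
        nSeq a i.val * a i.val =
          ∑ j ∈ Finset.univ.filter (fun j : Fin (g + 1) => j.val < i.val),
            lam i j * a j.val) ∧
      RingHom.ker (phiMap g a) =
        Ideal.span
          (((Finset.univ.filter (fun i : Fin (g + 1) => i ≠ 0)).image
            (fun i : Fin (g + 1) =>
              (MvPolynomial.X i : MvPolynomial (Fin (g + 1)) ℂ) ^ (nSeq a i.val) -
                ∏ j ∈ Finset.univ.filter (fun j : Fin (g + 1) => j.val < i.val),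
                  (MvPolynomial.X j : MvPolynomial (Fin (g + 1)) ℂ) ^ (lam i j)) :
            Finset (MvPolynomial (Fin (g + 1)) ℂ)) : Set (MvPolynomial (Fin (g + 1)) ℂ)) := by
  classical
  have ha0 : 0 < a 0 := hpos 0 (Nat.zero_le g)
  -- Step A : choose the lambda's
  have hexist : ∀ i : Fin (g + 1), i ≠ 0 →
      ∃ c : ℕ → ℕ, nSeq a i.val * a i.val = ∑ j ∈ Finset.range i.val, c j * a j := by
    intro i hi
    have hv : (i : ℕ) ≠ 0 := by intro h; exact hi (Fin.ext (by simp [h]))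
    obtain ⟨c, hc⟩ := hfree.2 i.val (by omega) (by have := i.isLt; omega)
    refine ⟨c, ?_⟩
    rw [hc, show i.val - 1 + 1 = i.val from by omega]
  choose F hF using hexist
  have hlamex : ∃ lam : Fin (g + 1) → Fin (g + 1) → ℕ,
      ∀ i : Fin (g + 1), i ≠ 0 →
        nSeq a i.val * a i.val =
          ∑ j ∈ Finset.univ.filter (fun j : Fin (g + 1) => j.val < i.val),
            lam i j * a j.val := by
    refine ⟨fun i j => if h : i = 0 then 0 else F i h j.val, fun i hi => ?_⟩
    simp only [dif_neg hi]
    rw [hF i hi]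
    exact (sum_filter_lt g i.val (le_of_lt i.isLt)
      (fun m => F i hi m * a m)).symm
  obtain ⟨lam, hlam⟩ := hlamex
  refine ⟨lam, hlam, ?_⟩
  -- the generators
  set gens : Finset (MvPolynomial (Fin (g + 1)) ℂ) :=
    (Finset.univ.filter (fun i : Fin (g + 1) => i ≠ 0)).image
      (fun i : Fin (g + 1) =>
        (MvPolynomial.X i : MvPolynomial (Fin (g + 1)) ℂ) ^ (nSeq a i.val) -
          ∏ j ∈ Finset.univ.filter (fun j : Fin (g + 1) => j.val < i.val),
            (MvPolynomial.X j : MvPolynomial (Fin (g + 1)) ℂ) ^ (lam i j)) with hgens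
  -- the generators are in the kernel
  have hgenker : ∀ p ∈ gens, phiMap g a p = 0 := by
    intro p hp
    rw [hgens, Finset.mem_image] at hp
    obtain ⟨i, hi, rfl⟩ := hp
    have hi0 : i ≠ 0 := (Finset.mem_filter.mp hi).2
    have h1 : phiMap g a (MvPolynomial.X i ^ nSeq a i.val)
        = Polynomial.X ^ (nSeq a i.val * a i.val) := by
      simp only [phiMap, map_pow, MvPolynomial.aeval_X, ← pow_mul]
      rw [mul_comm]
    have h2 : phiMap g a (∏ j ∈ Finset.univ.filter (fun j : Fin (g+1) => j.val < i.val),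
        MvPolynomial.X j ^ lam i j) = Polynomial.X ^ (nSeq a i.val * a i.val) := by
      rw [map_prod]
      simp only [phiMap, map_pow, MvPolynomial.aeval_X, ← pow_mul]
      rw [Finset.prod_pow_eq_pow_sum]
      congr 1
      rw [hlam i hi0]
      exact Finset.sum_congr rfl fun j _ => mul_comm _ _
    rw [map_sub, h1, h2, sub_self]
  have hJker : Ideal.span (gens : Set (MvPolynomial (Fin (g+1)) ℂ))
      ≤ RingHom.ker (phiMap g a) := by
    rw [Ideal.span_le]
    intro p hp
    rw [SetLike.mem_coe, RingHom.mem_ker]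
    exact hgenker p (Finset.mem_coe.mp hp)
  -- weights and measure
  set lam' : ℕ → ℕ → ℕ := fun p q =>
    if hp : p < g + 1 then if hq : q < g + 1 then lam ⟨p, hp⟩ ⟨q, hq⟩ else 0 else 0 with hlam'
  have hlam'eq : ∀ (i j : Fin (g + 1)), lam' i.val j.val = lam i j := by
    intro i j
    simp [hlam', i.isLt, j.isLt, Nat.le_of_lt_succ i.isLt, Nat.le_of_lt_succ j.isLt]
  set w : ℕ → ℕ := wtAux lam' with hw
  set mu : (Fin (g + 1) →₀ ℕ) → ℕ := fun c => ∑ i : Fin (g + 1), c i * w i.val with hmu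
  have mu_add : ∀ x y, mu (x + y) = mu x + mu y := by
    intro x y
    simp [hmu, Finsupp.add_apply, add_mul, Finset.sum_add_distrib]
  have mu_single : ∀ (j : Fin (g + 1)) (k : ℕ), mu (Finsupp.single j k) = k * w j.val := by
    intro j k
    simp only [hmu, Finsupp.single_apply]
    rw [Finset.sum_eq_single j]
    · simp
    · intro b _ hb
      rw [if_neg (fun h => hb h.symm), zero_mul]
    · intro h; exact absurd (Finset.mem_univ j) h
  have mu_sum_single : ∀ (s : Finset (Fin (g+1))) (d : Fin (g+1) → ℕ),
      mu (∑ j ∈ s, Finsupp.single j (d j)) = ∑ j ∈ s, d j * w j.val := by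
    intro s d
    induction s using Finset.cons_induction with
    | empty => simp [hmu]
    | cons j s hj ih => rw [Finset.sum_cons, Finset.sum_cons, mu_add, mu_single, ih]
  -- normal forms
  set NF : (Fin (g + 1) →₀ ℕ) → Prop :=
    fun c => ∀ i : Fin (g + 1), i ≠ 0 → c i < nSeq a i.val with hNF
  set T : Submodule ℂ (MvPolynomial (Fin (g+1)) ℂ) :=
    (Ideal.span (gens : Set (MvPolynomial (Fin (g+1)) ℂ))).restrictScalars ℂ ⊔
      Submodule.span ℂ (Set.range fun c : {c : Fin (g + 1) →₀ ℕ // NF c} =>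
        (MvPolynomial.monomial c.1 1 : MvPolynomial (Fin (g+1)) ℂ)) with hT
  -- every monomial is in T
  have main : ∀ N (c : Fin (g + 1) →₀ ℕ), mu c = N →
      (MvPolynomial.monomial c 1 : MvPolynomial (Fin (g+1)) ℂ) ∈ T := by
    intro N
    induction N using Nat.strong_induction_on with
    | _ N ih =>
      intro c hc
      by_cases hNFc : NF c
      · exact Submodule.mem_sup_right (Submodule.subset_span ⟨⟨c, hNFc⟩, rfl⟩)
      · have hex : ∃ i : Fin (g + 1), i ≠ 0 ∧ nSeq a i.val ≤ c i := by
          by_contra h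
          push_neg at h
          exact hNFc (fun i hi => h i hi)
        obtain ⟨i, hi0, hni⟩ := hex
        have hiv : (i : ℕ) ≠ 0 := by intro h; exact hi0 (Fin.ext (by simp [h]))
        have hnipos : 0 < nSeq a i.val := nSeq_pos a ha0 i.val (by omega)
        set c'' := c - Finsupp.single i (nSeq a i.val) with hc''
        have hsplit : c'' + Finsupp.single i (nSeq a i.val) = c := by
          ext j
          simp only [hc'', Finsupp.add_apply, Finsupp.tsub_apply, Finsupp.single_apply]
          split_ifs with hij
          · subst hij; omega
          · simp
        set L := ∑ j ∈ Finset.univ.filter (fun j : Fin (g + 1) => j.val < i.val),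
          Finsupp.single j (lam i j) with hL
        set c' := c'' + L with hc'
        have hbin : (MvPolynomial.monomial c 1 : MvPolynomial (Fin (g+1)) ℂ)
            - MvPolynomial.monomial c' 1
            = MvPolynomial.monomial c'' 1 *
              ((MvPolynomial.X i) ^ (nSeq a i.val) -
                ∏ j ∈ Finset.univ.filter (fun j : Fin (g + 1) => j.val < i.val),
                  (MvPolynomial.X j) ^ (lam i j)) := by
          rw [mul_sub, MvPolynomial.X_pow_eq_monomial, prod_X_pow,
            MvPolynomial.monomial_mul, MvPolynomial.monomial_mul, one_mul, hsplit, ← hL, ← hc']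
        have hmemJ : ((MvPolynomial.monomial c 1 : MvPolynomial (Fin (g+1)) ℂ)
            - MvPolynomial.monomial c' 1)
            ∈ Ideal.span (gens : Set (MvPolynomial (Fin (g+1)) ℂ)) := by
          rw [hbin]
          refine Ideal.mul_mem_left _ _ (Ideal.subset_span ?_)
          rw [hgens]
          exact Finset.mem_coe.mpr (Finset.mem_image.mpr
            ⟨i, Finset.mem_filter.mpr ⟨Finset.mem_univ _, hi0⟩, rfl⟩)
        -- measure decrease
        have hmuL : mu L = ∑ j ∈ Finset.univ.filter (fun j : Fin (g+1) => j.val < i.val),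
            lam i j * w j.val := by
          rw [hL]; exact mu_sum_single _ _
        have hwi : w i.val = 1 + ∑ j ∈ Finset.range i.val, lam' i.val j * w j := by
          obtain ⟨m, hm⟩ : ∃ m, i.val = m + 1 := ⟨i.val - 1, by omega⟩
          rw [hw, hm]
          exact wtAux_succ lam' m
        have hmuL2 : mu L = ∑ j ∈ Finset.range i.val, lam' i.val j * w j := by
          rw [hmuL, ← sum_filter_lt g i.val (le_of_lt i.isLt) (fun m => lam' i.val m * w m)]
          exact Finset.sum_congr rfl fun j _ => by rw [hlam'eq i j]
        have hmuc : mu c = mu c'' + nSeq a i.val * w i.val := by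
          rw [← hsplit, mu_add, mu_single]
        have hmuc' : mu c' = mu c'' + mu L := by rw [hc', mu_add]
        have hdec : mu c' < mu c := by
          have h1 : mu L + 1 = w i.val := by rw [hmuL2, hwi]; omega
          have h2 : w i.val ≤ nSeq a i.val * w i.val := Nat.le_mul_of_pos_left _ hnipos
          omega
        have hc'mem := ih (mu c') (by omega) c' rfl
        have hrw : (MvPolynomial.monomial c 1 : MvPolynomial (Fin (g+1)) ℂ) =
            ((MvPolynomial.monomial c 1 : MvPolynomial (Fin (g+1)) ℂ)
              - MvPolynomial.monomial c' 1) + MvPolynomial.monomial c' 1 := by ring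
        rw [hrw]
        exact Submodule.add_mem _
          (Submodule.mem_sup_left ((Submodule.restrictScalars_mem ℂ _ _).mpr hmemJ)) hc'mem
  -- everything is in T
  have hspan : ∀ p : MvPolynomial (Fin (g+1)) ℂ, p ∈ T := by
    intro p
    rw [MvPolynomial.as_sum p]
    refine Submodule.sum_mem _ fun v hv => ?_
    have hsm : (MvPolynomial.monomial v (MvPolynomial.coeff v p) : MvPolynomial (Fin (g+1)) ℂ)
        = (MvPolynomial.coeff v p) • MvPolynomial.monomial v 1 := by
      rw [MvPolynomial.smul_monomial, smul_eq_mul, mul_one]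
    rw [hsm]
    exact Submodule.smul_mem _ _ (main (mu v) v rfl)
  -- conclusion
  refine le_antisymm ?_ hJker
  intro p hp
  obtain ⟨u, hu, q, hq, huq⟩ := Submodule.mem_sup.mp (hspan p)
  have hu' : u ∈ Ideal.span (gens : Set (MvPolynomial (Fin (g+1)) ℂ)) :=
    (Submodule.restrictScalars_mem ℂ _ _).mp hu
  have hφu : phiMap g a u = 0 := RingHom.mem_ker.mp (hJker hu')
  have hφp : phiMap g a p = 0 := RingHom.mem_ker.mp hp
  have hφq : phiMap g a q = 0 := by
    have hpe : p = u + q := huq.symm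
    rw [hpe, map_add, hφu, zero_add] at hφp
    exact hφp
  obtain ⟨l, hl⟩ := Finsupp.mem_span_range_iff_exists_finsupp.mp hq
  have hli : LinearIndependent ℂ (fun cc : {c : Fin (g+1) →₀ ℕ // NF c} =>
      (Polynomial.X : Polynomial ℂ) ^ (∑ i : Fin (g+1), cc.1 i * a i.val)) := by
    have hinj : Function.Injective
        (fun cc : {c : Fin (g+1) →₀ ℕ // NF c} => ∑ i : Fin (g+1), cc.1 i * a i.val) := by
      intro x y hxy
      exact Subtype.ext (V_inj g a hpos x.1 y.1 x.2 y.2 hxy)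
    have hcomp := (Polynomial.basisMonomials ℂ).linearIndependent.comp _ hinj
    have heq : (fun cc : {c : Fin (g+1) →₀ ℕ // NF c} =>
        (Polynomial.X : Polynomial ℂ) ^ (∑ i : Fin (g+1), cc.1 i * a i.val))
        = (Polynomial.basisMonomials ℂ) ∘
          (fun cc : {c : Fin (g+1) →₀ ℕ // NF c} => ∑ i : Fin (g+1), cc.1 i * a i.val) := by
      funext cc
      simp [Polynomial.coe_basisMonomials, Polynomial.X_pow_eq_monomial]
    rw [heq]
    exact hcomp
  have hcomb : Finsupp.linearCombination ℂ (fun cc : {c : Fin (g+1) →₀ ℕ // NF c} =>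
      (Polynomial.X : Polynomial ℂ) ^ (∑ i : Fin (g+1), cc.1 i * a i.val)) l = 0 := by
    rw [Finsupp.linearCombination_apply, ← hφq, ← hl, map_finsuppSum]
    refine Finsupp.sum_congr fun cc _ => ?_
    rw [map_smul, phi_monomial]
  have hl0 : l = 0 := by
    have hinj2 := linearIndependent_iff_injective_finsuppLinearCombination.mp hli
    exact hinj2 (by rw [hcomb, map_zero])
  have hq0 : q = 0 := by
    rw [← hl, hl0, Finsupp.sum_zero_index]
  rw [← huq, hq0, add_zero]
  exact hu'
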